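/- arXiv:1702.02060 — 2 statements merged into one kernel-verified Lean document; each statement's English description precedes it below -/
import Mathlib

section
/- For every integer n ≥ 2, let H be the set consisting of the n−1 edges {w_n, v_i} for 1 ≤ i ≤ n−1 together with the n−1 edges {v_n, w_i} for 2 ≤ i ≤ n. Then |H| = 2(n−1), every edge of H is good for G_n, and χ_r(G_n ∪ H) = χ_r(G_n) = n+1. -/
open SimpleGraph

/-- `f` is a `k`-ranking of `G`: labels lie in `{1,…,k}` and whenever two distinct
vertices get the same label, every path connecting them contains a vertex of
strictly larger label. -/
def IsRanking {V : Type*} (G : SimpleGraph V) (k : ℕ) (f : V → ℕ) : Prop :=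
  (∀ v, 1 ≤ f v ∧ f v ≤ k) ∧
  ∀ u v, u ≠ v → f u = f v → ∀ p : G.Walk u v, p.IsPath → ∃ w ∈ p.support, f u < f w

/-- The rank number `χᵣ(G)`: the least `k` such that `G` admits a `k`-ranking. -/
noncomputable def rankNumber {V : Type*} (G : SimpleGraph V) : ℕ :=
  sInf {k | ∃ f : V → ℕ, IsRanking G k f}

/-- An edge `e ∉ E(G)` is good for `G` if adding it does not change the rank number. -/
def goodEdge {V : Type*} (G : SimpleGraph V) (e : Sym2 V) : Prop :=
  rankNumber (G ⊔ SimpleGraph.fromEdgeSet {e}) = rankNumber G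

/-- `G_n`: two disjoint copies of the complete graph `K_n`, with vertex sets
`W = {w_1, …, w_n}` (the left summand, `wᵢ = Sum.inl ⟨i - 1, _⟩`) and
`V = {v_1, …, v_n}` (the right summand, `vᵢ = Sum.inr ⟨i - 1, _⟩`), joined by the
single edge `w_1 v_n`. -/
def twoCliques (n : ℕ) : SimpleGraph (Fin n ⊕ Fin n) :=
  SimpleGraph.fromRel (fun a b =>
    (∃ i j : Fin n, a = Sum.inl i ∧ b = Sum.inl j) ∨
    (∃ i j : Fin n, a = Sum.inr i ∧ b = Sum.inr j) ∨
    (∃ i j : Fin n, i.val = 0 ∧ j.val = n - 1 ∧ a = Sum.inl i ∧ b = Sum.inr j))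

/-- monotonicity of rankings -/
lemma isRanking_mono {V : Type*} {G G' : SimpleGraph V} (hGG : G ≤ G') {k : ℕ} {f : V → ℕ}
    (h : IsRanking G' k f) : IsRanking G k f := by
  refine ⟨h.1, fun u v huv hf p hp => ?_⟩
  have he : ∀ e ∈ p.edges, e ∈ G'.edgeSet := fun e hep =>
    edgeSet_mono hGG (p.edges_subset_edgeSet hep)
  obtain ⟨w, hw, hlt⟩ := h.2 u v huv hf (p.transfer G' he) (hp.transfer he)
  exact ⟨w, by rwa [SimpleGraph.Walk.support_transfer] at hw, hlt⟩

lemma isRanking_le {V : Type*} {G : SimpleGraph V} {k k' : ℕ} (hk : k ≤ k') {f : V → ℕ}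
    (h : IsRanking G k f) : IsRanking G k' f :=
  ⟨fun v => ⟨(h.1 v).1, le_trans (h.1 v).2 hk⟩, h.2⟩

lemma rankNumber_eq {V : Type*} {G : SimpleGraph V} {k : ℕ}
    (h1 : ∃ f, IsRanking G k f) (h2 : ∀ m, m < k → ¬ ∃ f, IsRanking G m f) :
    rankNumber G = k := by
  refine le_antisymm (Nat.sInf_le h1) (le_csInf ⟨k, h1⟩ ?_)
  intro m hm
  by_contra hlt
  exact h2 m (by omega) hm

variable {n : ℕ}

lemma n_sub_one_lt_aux (hn : 2 ≤ n) : n - 1 < n := by omega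

lemma twoCliques_adj_ll (hn : 2 ≤ n) {i j : Fin n} (hij : i ≠ j) :
    (twoCliques n).Adj (Sum.inl i) (Sum.inl j) := by
  refine ⟨by simpa using hij, Or.inl ?_⟩
  exact Or.inl ⟨i, j, rfl, rfl⟩

lemma twoCliques_adj_rr (hn : 2 ≤ n) {i j : Fin n} (hij : i ≠ j) :
    (twoCliques n).Adj (Sum.inr i) (Sum.inr j) := by
  refine ⟨by simpa using hij, Or.inl ?_⟩
  exact Or.inr (Or.inl ⟨i, j, rfl, rfl⟩)

lemma twoCliques_adj_lr (hn : 2 ≤ n) :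
    (twoCliques n).Adj (Sum.inl ⟨0, by omega⟩) (Sum.inr ⟨n-1, n_sub_one_lt_aux hn⟩) := by
  refine ⟨by simp, Or.inl ?_⟩
  exact Or.inr (Or.inr ⟨⟨0, by omega⟩, ⟨n-1, n_sub_one_lt_aux hn⟩, rfl, rfl, rfl, rfl⟩)

/-- the two special vertices -/
def wn (hn : 2 ≤ n) : Fin n ⊕ Fin n := Sum.inl ⟨n-1, n_sub_one_lt_aux hn⟩
def vn (hn : 2 ≤ n) : Fin n ⊕ Fin n := Sum.inr ⟨n-1, n_sub_one_lt_aux hn⟩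

/-- cut lemma for adjacency in the big graph -/
lemma bigGraph_cross (hn : 2 ≤ n) {H : Set (Sym2 (Fin n ⊕ Fin n))}
    (hH : H = {e | ∃ i : Fin n, i.val ≤ n - 2 ∧
              e = s(Sum.inl ⟨n - 1, n_sub_one_lt_aux hn⟩, Sum.inr i)} ∪
          {e | ∃ i : Fin n, 1 ≤ i.val ∧
              e = s(Sum.inr ⟨n - 1, n_sub_one_lt_aux hn⟩, Sum.inl i)})
    {i j : Fin n} (h : ((twoCliques n) ⊔ SimpleGraph.fromEdgeSet H).Adj (Sum.inl i) (Sum.inr j)) :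
    i.val = n - 1 ∨ j.val = n - 1 := by
  rcases h with h | h
  · rcases h with ⟨hne, h | h⟩
    · rcases h with (⟨a, b, ha, hb⟩ | ⟨a, b, ha, hb⟩ | ⟨a, b, ha0, hb1, ha, hb⟩)
      · exact absurd hb (by simp)
      · exact absurd ha (by simp)
      · injection hb with h'; right; rw [h']; exact hb1
    · rcases h with (⟨a, b, ha, hb⟩ | ⟨a, b, ha, hb⟩ | ⟨a, b, _, _, ha, hb⟩)
      · exact absurd ha (by simp)
      · exact absurd hb (by simp)
      · exact absurd ha (by simp)
  · rw [hH] at h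
    rcases h.1 with ⟨a, ha, he⟩ | ⟨a, ha, he⟩
    · rw [Sym2.eq_iff] at he
      rcases he with ⟨h1, h2⟩ | ⟨h1, h2⟩
      · left; injection h1 with h'; rw [h']
      · exact absurd h1 (by simp)
    · rw [Sym2.eq_iff] at he
      rcases he with ⟨h1, h2⟩ | ⟨h1, h2⟩
      · exact absurd h1 (by simp)
      · right; injection h2 with h'; rw [h']

/-- any walk from left to right passes through wn or vn -/
lemma bigGraph_walk_cut (hn : 2 ≤ n) {H : Set (Sym2 (Fin n ⊕ Fin n))}
    (hH : H = {e | ∃ i : Fin n, i.val ≤ n - 2 ∧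
              e = s(Sum.inl ⟨n - 1, n_sub_one_lt_aux hn⟩, Sum.inr i)} ∪
          {e | ∃ i : Fin n, 1 ≤ i.val ∧
              e = s(Sum.inr ⟨n - 1, n_sub_one_lt_aux hn⟩, Sum.inl i)})
    {u v : Fin n ⊕ Fin n} (p : ((twoCliques n) ⊔ SimpleGraph.fromEdgeSet H).Walk u v)
    (hu : u.isLeft) (hv : v.isRight) :
    (Sum.inl ⟨n-1, n_sub_one_lt_aux hn⟩ : Fin n ⊕ Fin n) ∈ p.support ∨
    (Sum.inr ⟨n-1, n_sub_one_lt_aux hn⟩ : Fin n ⊕ Fin n) ∈ p.support := by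
  induction p with
  | nil => rw [Sum.isLeft_iff] at hu; rcases hu with ⟨i, rfl⟩; simp at hv
  | @cons a b c hab p ih =>
    rw [Sum.isLeft_iff] at hu; rcases hu with ⟨i, rfl⟩
    rcases b with bl | br
    · rcases ih (by simp) hv with h | h
      · left; rw [SimpleGraph.Walk.support_cons]; exact List.mem_cons_of_mem _ h
      · right; rw [SimpleGraph.Walk.support_cons]; exact List.mem_cons_of_mem _ h
    · rcases bigGraph_cross hn hH hab with h | h
      · left
        rw [SimpleGraph.Walk.support_cons]
        refine List.mem_cons.mpr (Or.inl ?_)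
        exact congrArg Sum.inl (Fin.ext h.symm)
      · right
        rw [SimpleGraph.Walk.support_cons]
        refine List.mem_cons_of_mem _ ?_
        convert p.start_mem_support using 2
        exact Fin.ext h.symm

/-- the explicit ranking -/
def rkg (n : ℕ) : Fin n ⊕ Fin n → ℕ
  | Sum.inl i => i.val + 1
  | Sum.inr i => if i.val = n - 1 then n + 1 else i.val + 1

lemma rkg_isRanking (hn : 2 ≤ n) {H : Set (Sym2 (Fin n ⊕ Fin n))}
    (hH : H = {e | ∃ i : Fin n, i.val ≤ n - 2 ∧
              e = s(Sum.inl ⟨n - 1, n_sub_one_lt_aux hn⟩, Sum.inr i)} ∪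
          {e | ∃ i : Fin n, 1 ≤ i.val ∧
              e = s(Sum.inr ⟨n - 1, n_sub_one_lt_aux hn⟩, Sum.inl i)}) :
    IsRanking ((twoCliques n) ⊔ SimpleGraph.fromEdgeSet H) (n+1) (rkg n) := by
  constructor
  · rintro (i | i) <;> simp only [rkg]
    · exact ⟨by omega, by have := i.isLt; omega⟩
    · split <;> [exact ⟨by omega, le_refl _⟩; exact ⟨by omega, by have := i.isLt; omega⟩]
  · rintro (i | i) (j | j) hne hf p hp
    · exfalso; apply hne; simp only [rkg] at hf
      have : i = j := Fin.ext (by omega)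
      rw [this]
    · -- left to right, equal labels
      simp only [rkg] at hf
      have hjn : j.val ≠ n - 1 := by
        intro h; rw [if_pos h] at hf; have := i.isLt; omega
      rw [if_neg hjn] at hf
      have hij : i.val = j.val := by omega
      have hi2 : i.val ≤ n - 2 := by have := j.isLt; omega
      rcases bigGraph_walk_cut hn hH p (by simp) (by simp) with h | h
      · refine ⟨_, h, ?_⟩
        show i.val + 1 < n - 1 + 1
        omega
      · refine ⟨_, h, ?_⟩
        show i.val + 1 < if n - 1 = n - 1 then n + 1 else n - 1 + 1
        rw [if_pos rfl]
        omega
    · -- right to left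
      simp only [rkg] at hf
      have hin : i.val ≠ n - 1 := by
        intro h; rw [if_pos h] at hf; have := j.isLt; omega
      rw [if_neg hin] at hf
      have hi2 : i.val ≤ n - 2 := by have := i.isLt; omega
      rcases bigGraph_walk_cut hn hH p.reverse (by simp) (by simp) with h | h
      · rw [SimpleGraph.Walk.support_reverse, List.mem_reverse] at h
        refine ⟨_, h, ?_⟩
        show (if i.val = n - 1 then n + 1 else i.val + 1) < n - 1 + 1
        rw [if_neg hin]
        omega
      · rw [SimpleGraph.Walk.support_reverse, List.mem_reverse] at h
        refine ⟨_, h, ?_⟩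
        show (if i.val = n - 1 then n + 1 else i.val + 1) <
          if n - 1 = n - 1 then n + 1 else n - 1 + 1
        rw [if_neg hin, if_pos rfl]
        omega
    · exfalso; apply hne; simp only [rkg] at hf
      have : i = j := by
        rcases eq_or_ne i.val (n-1) with h1 | h1 <;> rcases eq_or_ne j.val (n-1) with h2 | h2
        · exact Fin.ext (by omega)
        · rw [if_pos h1, if_neg h2] at hf; have := j.isLt; omega
        · rw [if_neg h1, if_pos h2] at hf; have := i.isLt; omega
        · rw [if_neg h1, if_neg h2] at hf; exact Fin.ext (by omega)
      rw [this]

/-- lower bound: no n-ranking of twoCliques n -/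
lemma twoCliques_no_small (hn : 2 ≤ n) : ¬ ∃ f, IsRanking (twoCliques n) n f := by
  rintro ⟨f, hb, hr⟩
  -- injectivity on cliques
  have hinjl : Function.Injective (fun i : Fin n => f (Sum.inl i)) := by
    intro i j hij
    have hij' : f (Sum.inl i) = f (Sum.inl j) := hij
    by_contra hne
    have hadj := twoCliques_adj_ll hn hne
    have hpath : ((SimpleGraph.Walk.cons hadj SimpleGraph.Walk.nil) :
        (twoCliques n).Walk (Sum.inl i) (Sum.inl j)).IsPath := by
      simp [SimpleGraph.Walk.isPath_def]
      simpa using hne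
    obtain ⟨w, hw, hlt⟩ := hr (Sum.inl i) (Sum.inl j) (by simpa using hne) hij' _ hpath
    simp [SimpleGraph.Walk.support_cons] at hw
    rcases hw with rfl | rfl
    · omega
    · omega
  have hinjr : Function.Injective (fun i : Fin n => f (Sum.inr i)) := by
    intro i j hij
    have hij' : f (Sum.inr i) = f (Sum.inr j) := hij
    by_contra hne
    have hadj := twoCliques_adj_rr hn hne
    have hpath : ((SimpleGraph.Walk.cons hadj SimpleGraph.Walk.nil) :
        (twoCliques n).Walk (Sum.inr i) (Sum.inr j)).IsPath := by
      simp [SimpleGraph.Walk.isPath_def]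
      simpa using hne
    obtain ⟨w, hw, hlt⟩ := hr (Sum.inr i) (Sum.inr j) (by simpa using hne) hij' _ hpath
    simp [SimpleGraph.Walk.support_cons] at hw
    rcases hw with rfl | rfl
    · omega
    · omega
  -- surjectivity: some a with f (inl a) = n
  have hsurl : ∃ a : Fin n, f (Sum.inl a) = n := by
    have : Function.Injective (fun i : Fin n => (⟨f (Sum.inl i) - 1,
        by have := (hb (Sum.inl i)).1; have := (hb (Sum.inl i)).2; omega⟩ : Fin n)) := by
      intro i j h
      apply hinjl
      simp only [Fin.mk.injEq] at h
      have h1 := (hb (Sum.inl i)).1; have h2 := (hb (Sum.inl j)).1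
      simp only; omega
    obtain ⟨a, ha⟩ := (Finite.injective_iff_surjective.mp this) ⟨n-1, n_sub_one_lt_aux hn⟩
    refine ⟨a, ?_⟩
    simp only [Fin.mk.injEq] at ha
    have := (hb (Sum.inl a)).1; have := (hb (Sum.inl a)).2; omega
  have hsurr : ∃ b : Fin n, f (Sum.inr b) = n := by
    have : Function.Injective (fun i : Fin n => (⟨f (Sum.inr i) - 1,
        by have := (hb (Sum.inr i)).1; have := (hb (Sum.inr i)).2; omega⟩ : Fin n)) := by
      intro i j h
      apply hinjr
      simp only [Fin.mk.injEq] at h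
      have h1 := (hb (Sum.inr i)).1; have h2 := (hb (Sum.inr j)).1
      simp only; omega
    obtain ⟨b, hbb⟩ := (Finite.injective_iff_surjective.mp this) ⟨n-1, n_sub_one_lt_aux hn⟩
    refine ⟨b, ?_⟩
    simp only [Fin.mk.injEq] at hbb
    have := (hb (Sum.inr b)).1; have := (hb (Sum.inr b)).2; omega
  obtain ⟨a, ha⟩ := hsurl
  obtain ⟨b, hbn⟩ := hsurr
  have hz : 0 < n := by omega
  have he' : n - 1 < n := by omega
  -- build a path from inl a to inr b
  have key : ∃ p : (twoCliques n).Walk (Sum.inl a) (Sum.inr b), p.IsPath := by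
    rcases eq_or_ne a (⟨0, hz⟩ : Fin n) with ha0 | ha0 <;>
      rcases eq_or_ne b (⟨n-1, he'⟩ : Fin n) with hb1 | hb1
    · subst ha0; subst hb1
      exact ⟨SimpleGraph.Walk.cons (twoCliques_adj_lr hn) SimpleGraph.Walk.nil,
        by simp [SimpleGraph.Walk.isPath_def]⟩
    · subst ha0
      refine ⟨SimpleGraph.Walk.cons (twoCliques_adj_lr hn)
        (SimpleGraph.Walk.cons (twoCliques_adj_rr hn (Ne.symm hb1)) SimpleGraph.Walk.nil), ?_⟩
      simp [SimpleGraph.Walk.isPath_def]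
      exact fun h => hb1 h.symm
    · subst hb1
      refine ⟨SimpleGraph.Walk.cons (twoCliques_adj_ll hn ha0)
        (SimpleGraph.Walk.cons (twoCliques_adj_lr hn) SimpleGraph.Walk.nil), ?_⟩
      simp [SimpleGraph.Walk.isPath_def]
      exact ha0
    · refine ⟨SimpleGraph.Walk.cons (twoCliques_adj_ll hn ha0)
        (SimpleGraph.Walk.cons (twoCliques_adj_lr hn)
        (SimpleGraph.Walk.cons (twoCliques_adj_rr hn (Ne.symm hb1)) SimpleGraph.Walk.nil)), ?_⟩
      simp [SimpleGraph.Walk.isPath_def]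
      exact ⟨ha0, fun h => hb1 h.symm⟩
  obtain ⟨p, hp⟩ := key
  obtain ⟨w, _, hlt⟩ := hr (Sum.inl a) (Sum.inr b) (by simp) (by rw [ha, hbn]) p hp
  have := (hb w).2
  omega

/-- for `n ≥ 2`, let `H` consist of the `n - 1` edges `{w_n, v_i}` for
`1 ≤ i ≤ n - 1` together with the `n - 1` edges `{v_n, w_i}` for `2 ≤ i ≤ n` (here
`wᵢ = Sum.inl ⟨i - 1, _⟩` and `vᵢ = Sum.inr ⟨i - 1, _⟩`). Then `|H| = 2(n - 1)`, every
edge of `H` is good for `G_n`, and `χᵣ(G_n ∪ H) = χᵣ(G_n) = n + 1`. -/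
theorem twoCliques_good_edge_set (n : ℕ) (hn : 2 ≤ n) :
    ∀ H : Set (Sym2 (Fin n ⊕ Fin n)),
      H = {e | ∃ i : Fin n, i.val ≤ n - 2 ∧
              e = s(Sum.inl ⟨n - 1, by omega⟩, Sum.inr i)} ∪
          {e | ∃ i : Fin n, 1 ≤ i.val ∧
              e = s(Sum.inr ⟨n - 1, by omega⟩, Sum.inl i)} →
      H.ncard = 2 * (n - 1) ∧
      (∀ e ∈ H, goodEdge (twoCliques n) e) ∧
      rankNumber ((twoCliques n) ⊔ SimpleGraph.fromEdgeSet H) = n + 1 ∧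
      rankNumber (twoCliques n) = n + 1 := by
  intro H hH
  -- key ranking facts
  have hbig : IsRanking ((twoCliques n) ⊔ SimpleGraph.fromEdgeSet H) (n+1) (rkg n) :=
    rkg_isRanking hn hH
  have hlow : ∀ (G' : SimpleGraph (Fin n ⊕ Fin n)), twoCliques n ≤ G' →
      ∀ m, m < n + 1 → ¬ ∃ f, IsRanking G' m f := by
    intro G' hle m hm ⟨f, hf⟩
    exact twoCliques_no_small hn ⟨f, isRanking_mono hle (isRanking_le (by omega) hf)⟩
  have hrankBig : rankNumber ((twoCliques n) ⊔ SimpleGraph.fromEdgeSet H) = n + 1 :=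
    rankNumber_eq ⟨rkg n, hbig⟩ (hlow _ le_sup_left)
  have hrankG : rankNumber (twoCliques n) = n + 1 :=
    rankNumber_eq ⟨rkg n, isRanking_mono le_sup_left hbig⟩ (hlow _ le_rfl)
  refine ⟨?_, ?_, hrankBig, hrankG⟩
  · -- cardinality
    set e₁ : Fin n → Sym2 (Fin n ⊕ Fin n) :=
      fun i => s(Sum.inl ⟨n - 1, by omega⟩, Sum.inr i) with he₁
    set e₂ : Fin n → Sym2 (Fin n ⊕ Fin n) :=
      fun i => s(Sum.inr ⟨n - 1, by omega⟩, Sum.inl i) with he₂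
    have h1 : {e | ∃ i : Fin n, i.val ≤ n - 2 ∧
        e = s((Sum.inl ⟨n - 1, by omega⟩ : Fin n ⊕ Fin n), Sum.inr i)} =
        e₁ '' (Set.Iic (⟨n-2, by omega⟩ : Fin n)) := by
      ext e
      simp only [Set.mem_setOf_eq, Set.mem_image, Set.mem_Iic, he₁]
      constructor
      · rintro ⟨i, hi, rfl⟩; exact ⟨i, by rwa [Fin.le_def], rfl⟩
      · rintro ⟨i, hi, rfl⟩; exact ⟨i, by rwa [Fin.le_def] at hi, rfl⟩
    have h2 : {e | ∃ i : Fin n, 1 ≤ i.val ∧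
        e = s((Sum.inr ⟨n - 1, by omega⟩ : Fin n ⊕ Fin n), Sum.inl i)} =
        e₂ '' (Set.Ici (⟨1, by omega⟩ : Fin n)) := by
      ext e
      simp only [Set.mem_setOf_eq, Set.mem_image, Set.mem_Ici, he₂]
      constructor
      · rintro ⟨i, hi, rfl⟩; exact ⟨i, by rwa [Fin.le_def], rfl⟩
      · rintro ⟨i, hi, rfl⟩; exact ⟨i, by rwa [Fin.le_def] at hi, rfl⟩
    have hinj1 : Function.Injective e₁ := by
      intro i j h; simpa [he₁, Sym2.congr_right] using h
    have hinj2 : Function.Injective e₂ := by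
      intro i j h; simpa [he₂, Sym2.congr_right] using h
    have hdisj : Disjoint (e₁ '' (Set.Iic (⟨n-2, by omega⟩ : Fin n)))
        (e₂ '' (Set.Ici (⟨1, by omega⟩ : Fin n))) := by
      rw [Set.disjoint_left]
      rintro e ⟨i, hi, rfl⟩ ⟨j, hj, he⟩
      simp only [he₁, he₂, Sym2.eq_iff] at he
      rcases he with ⟨h1', h2'⟩ | ⟨h1', h2'⟩
      · exact absurd h1' (by simp)
      · injection h1' with h'
        have hval : n - 1 = i.val := congrArg Fin.val h'
        have hi' : i.val ≤ n - 2 := hi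
        omega
    rw [hH, h1, h2, Set.ncard_union_eq hdisj (Set.toFinite _) (Set.toFinite _),
      Set.ncard_image_of_injective _ hinj1, Set.ncard_image_of_injective _ hinj2,
      ← Finset.coe_Iic, ← Finset.coe_Ici, Set.ncard_coe_finset, Set.ncard_coe_finset,
      Fin.card_Iic, Fin.card_Ici]
    simp only
    omega
  · -- each edge good
    intro e he
    have hle1 : twoCliques n ≤ twoCliques n ⊔ SimpleGraph.fromEdgeSet {e} := le_sup_left
    have hle2 : twoCliques n ⊔ SimpleGraph.fromEdgeSet {e} ≤
        twoCliques n ⊔ SimpleGraph.fromEdgeSet H := by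
      apply sup_le_sup_left
      apply SimpleGraph.fromEdgeSet_mono
      simpa using he
    unfold goodEdge
    rw [hrankG]
    exact rankNumber_eq ⟨rkg n, isRanking_mono hle2 hbig⟩ (hlow _ hle1)
end

section
/- For every integer n ≥ 2, μ(G_n) = 2(n−1); that is, the maximum number of edges that can be added to G_n without changing its rank number is 2(n−1). -/
open SimpleGraph

/-- `μ(G)`: the maximum cardinality of a set `S` of edges on `V(G)` (non-loops,
disjoint from `E(G)`) such that `χᵣ(G ∪ S) = χᵣ(G)`. -/
noncomputable def mu {V : Type*} (G : SimpleGraph V) : ℕ :=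
  sSup {N | ∃ S : Finset (Sym2 V), S.card = N ∧
    (∀ e ∈ S, ¬e.IsDiag ∧ e ∉ G.edgeSet) ∧
    rankNumber (G ⊔ SimpleGraph.fromEdgeSet (S : Set (Sym2 V))) = rankNumber G}

/-! ### Auxiliary material -/

namespace MuTwoCliquesAux

open Sum

variable {n : ℕ}

lemma tc_adj_inl {i j : Fin n} (h : i ≠ j) : (twoCliques n).Adj (inl i) (inl j) := by
  simp only [twoCliques, fromRel_adj]
  refine ⟨by simpa using h, Or.inl (Or.inl ⟨i, j, rfl, rfl⟩)⟩

lemma tc_adj_inr {i j : Fin n} (h : i ≠ j) : (twoCliques n).Adj (inr i) (inr j) := by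
  simp only [twoCliques, fromRel_adj]
  refine ⟨by simpa using h, Or.inl (Or.inr (Or.inl ⟨i, j, rfl, rfl⟩))⟩

lemma tc_adj_bridge {i j : Fin n} (hi : i.val = 0) (hj : j.val = n - 1) :
    (twoCliques n).Adj (inl i) (inr j) := by
  simp only [twoCliques, fromRel_adj]
  exact ⟨by simp, Or.inl (Or.inr (Or.inr ⟨i, j, hi, hj, rfl, rfl⟩))⟩

lemma tc_cross_adj {i j : Fin n} :
    (twoCliques n).Adj (inl i) (inr j) ↔ i.val = 0 ∧ j.val = n - 1 := by
  constructor
  · intro h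
    simp only [twoCliques, fromRel_adj] at h
    rcases h with ⟨-, h | h⟩
    · rcases h with ⟨a, b, h1, h2⟩ | ⟨a, b, h1, h2⟩ | ⟨a, b, h1, h2, h3, h4⟩ <;> simp_all
    · rcases h with ⟨a, b, h1, h2⟩ | ⟨a, b, h1, h2⟩ | ⟨a, b, h1, h2, h3, h4⟩ <;> simp_all
  · rintro ⟨hi, hj⟩; exact tc_adj_bridge hi hj

lemma ranking_adj_ne {V : Type*} {H : SimpleGraph V} {k : ℕ} {f : V → ℕ}
    (hf : IsRanking H k f) {u v : V} (h : H.Adj u v) : f u ≠ f v := by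
  intro he
  obtain ⟨w, hw, hlt⟩ := hf.2 u v h.ne he (Walk.cons h Walk.nil)
    (by simp [Walk.cons_isPath_iff, h.ne])
  simp only [Walk.support_cons, Walk.support_nil, List.mem_cons,
    List.not_mem_nil, or_false] at hw
  rcases hw with rfl | rfl
  · omega
  · omega

/-- The key path lemma: if `{inl a, inr b}` is an edge of `H ⊇ G_n` and some label
appears on both sides (at `inl i` and `inr j`), then `f (inl a)` or `f (inr b)`
exceeds that label. -/
lemma ranking_cross {H : SimpleGraph (Fin n ⊕ Fin n)} (hG : twoCliques n ≤ H)
    {k : ℕ} {f : Fin n ⊕ Fin n → ℕ} (hf : IsRanking H k f)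
    {a b i j : Fin n} (hab : H.Adj (inl a) (inr b)) (hij : f (inl i) = f (inr j)) :
    f (inl i) < f (inl a) ∨ f (inl i) < f (inr b) := by
  by_cases hai : a = i
  · subst hai
    by_cases hbj : b = j
    · subst hbj
      obtain ⟨w, hw, hlt⟩ := hf.2 (inl a) (inr b) (by simp) hij
        (Walk.cons hab Walk.nil) (by simp [Walk.cons_isPath_iff])
      simp only [Walk.support_cons, Walk.support_nil, List.mem_cons,
        List.not_mem_nil, or_false] at hw
      rcases hw with rfl | rfl
      · omega
      · omega
    · obtain ⟨w, hw, hlt⟩ := hf.2 (inl a) (inr j) (by simp) hij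
        (Walk.cons hab (Walk.cons (hG (tc_adj_inr hbj)) Walk.nil))
        (by simp [Walk.cons_isPath_iff, hbj])
      simp only [Walk.support_cons, Walk.support_nil, List.mem_cons,
        List.not_mem_nil, or_false] at hw
      rcases hw with rfl | rfl | rfl
      · omega
      · exact Or.inr hlt
      · omega
  · by_cases hbj : b = j
    · subst hbj
      obtain ⟨w, hw, hlt⟩ := hf.2 (inl i) (inr b) (by simp) hij
        (Walk.cons (hG (tc_adj_inl (Ne.symm hai))) (Walk.cons hab Walk.nil))
        (by simp [Walk.cons_isPath_iff, Ne.symm hai])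
      simp only [Walk.support_cons, Walk.support_nil, List.mem_cons,
        List.not_mem_nil, or_false] at hw
      rcases hw with rfl | rfl | rfl
      · omega
      · exact Or.inl hlt
      · omega
    · obtain ⟨w, hw, hlt⟩ := hf.2 (inl i) (inr j) (by simp) hij
        (Walk.cons (hG (tc_adj_inl (Ne.symm hai)))
          (Walk.cons hab (Walk.cons (hG (tc_adj_inr hbj)) Walk.nil)))
        (by simp [Walk.cons_isPath_iff, Ne.symm hai, hbj])
      simp only [Walk.support_cons, Walk.support_nil, List.mem_cons,
        List.not_mem_nil, or_false] at hw
      rcases hw with rfl | rfl | rfl | rfl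
      · omega
      · exact Or.inl hlt
      · exact Or.inr hlt
      · omega

section Basics
variable {H : SimpleGraph (Fin n ⊕ Fin n)} {k : ℕ} {f : Fin n ⊕ Fin n → ℕ}

lemma ranking_exists (H : SimpleGraph (Fin n ⊕ Fin n)) :
    ∃ k g, IsRanking H k g := by
  refine ⟨2 * n, Sum.elim (fun i => i.val + 1) (fun j => n + j.val + 1), ?_, ?_⟩
  · rintro (i | j) <;> simp <;> omega
  · intro u v hne he p hp
    exfalso; apply hne
    rcases u with i | i <;> rcases v with j | j <;> simp at he <;>
      first
        | (have := i.isLt; have := j.isLt; omega)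
        | (have h2 : i = j := by have := i.isLt; have := j.isLt; exact Fin.ext (by omega)
           rw [h2])

lemma rankNumber_le (hf : IsRanking H k f) : rankNumber H ≤ k :=
  Nat.sInf_le ⟨f, hf⟩

lemma rankNumber_spec (H : SimpleGraph (Fin n ⊕ Fin n)) :
    ∃ g, IsRanking H (rankNumber H) g := by
  obtain ⟨k, g, hg⟩ := ranking_exists H
  have := Nat.sInf_mem (s := {k | ∃ g, IsRanking H k g}) ⟨k, g, hg⟩
  exact this

lemma label_inj_inl (hG : twoCliques n ≤ H) (hf : IsRanking H k f) :
    Function.Injective (fun i : Fin n => f (inl i)) := by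
  intro i j h
  by_contra hne
  exact ranking_adj_ne hf (hG (tc_adj_inl hne)) h

lemma label_inj_inr (hG : twoCliques n ≤ H) (hf : IsRanking H k f) :
    Function.Injective (fun j : Fin n => f (inr j)) := by
  intro i j h
  by_contra hne
  exact ranking_adj_ne hf (hG (tc_adj_inr hne)) h

lemma rank_lb (hn : 2 ≤ n) (hG : twoCliques n ≤ H) (hf : IsRanking H k f) :
    n + 1 ≤ k := by
  by_contra hk
  push_neg at hk
  have h0 : 0 < n := by omega
  have h1 : n - 1 < n := by omega
  set A : Finset ℕ := Finset.univ.image (fun i : Fin n => f (inl i)) with hA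
  set B : Finset ℕ := Finset.univ.image (fun j : Fin n => f (inr j)) with hB
  have hAcard : A.card = n := by
    rw [hA, Finset.card_image_of_injective _ (label_inj_inl hG hf)]; simp
  have hBcard : B.card = n := by
    rw [hB, Finset.card_image_of_injective _ (label_inj_inr hG hf)]; simp
  have hAsub : A ⊆ Finset.Icc 1 k := by
    intro x hx
    simp only [hA, Finset.mem_image] at hx
    obtain ⟨i, -, rfl⟩ := hx
    simpa using hf.1 (inl i)
  have hBsub : B ⊆ Finset.Icc 1 k := by
    intro x hx
    simp only [hB, Finset.mem_image] at hx
    obtain ⟨j, -, rfl⟩ := hx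
    simpa using hf.1 (inr j)
  have hkn : k = n := by
    have := Finset.card_le_card hAsub
    rw [hAcard, Nat.card_Icc] at this
    omega
  rw [hkn] at hAsub hBsub hf
  have hAeq : A = Finset.Icc 1 n := Finset.eq_of_subset_of_card_le hAsub
    (by rw [hAcard, Nat.card_Icc]; omega)
  have hBeq : B = Finset.Icc 1 n := Finset.eq_of_subset_of_card_le hBsub
    (by rw [hBcard, Nat.card_Icc]; omega)
  have hnA : (n : ℕ) ∈ A := by rw [hAeq]; simp; omega
  have hnB : (n : ℕ) ∈ B := by rw [hBeq]; simp; omega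
  simp only [hA, Finset.mem_image] at hnA
  simp only [hB, Finset.mem_image] at hnB
  obtain ⟨i, -, hi⟩ := hnA
  obtain ⟨j, -, hj⟩ := hnB
  have hbr : H.Adj (inl ⟨0, h0⟩) (inr ⟨n - 1, h1⟩) := hG (tc_adj_bridge rfl rfl)
  have := ranking_cross hG hf hbr (hi.trans hj.symm)
  have b1 := (hf.1 (inl ⟨0, h0⟩)).2
  have b2 := (hf.1 (inr ⟨n - 1, h1⟩)).2
  omega

end Basics

/-- If every cross edge of `H` touches `inl ⟨0⟩` or `inr ⟨n-1⟩`, then every walk from the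
left side to the right side passes through one of them. -/
lemma crossing {H : SimpleGraph (Fin n ⊕ Fin n)} (h0 : 0 < n) (h1 : n - 1 < n)
    (hcr : ∀ i j : Fin n, H.Adj (inl i) (inr j) → i.val = 0 ∨ j.val = n - 1) :
    ∀ {u w : Fin n ⊕ Fin n} (p : H.Walk u w), (∃ i, u = inl i) → (∃ j, w = inr j) →
      inl ⟨0, h0⟩ ∈ p.support ∨ inr ⟨n - 1, h1⟩ ∈ p.support := by
  intro u w p
  induction p with
  | nil =>
    rintro ⟨i, rfl⟩ ⟨j, hj⟩
    exact absurd hj (by simp)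
  | @cons u v w h q ih =>
    rintro ⟨i, rfl⟩ hw
    rcases v with i' | j'
    · rcases ih ⟨i', rfl⟩ hw with hc | hc
      · exact Or.inl (by simp [Walk.support_cons, hc])
      · exact Or.inr (by simp [Walk.support_cons, hc])
    · rcases hcr i j' h with hc | hc
      · left
        have : (⟨0, h0⟩ : Fin n) = i := Fin.ext hc.symm
        rw [this]
        simp [Walk.support_cons]
      · right
        have : (⟨n - 1, h1⟩ : Fin n) = j' := Fin.ext hc.symm
        rw [this]
        simp [Walk.support_cons, Walk.start_mem_support]

/-- The optimal labeling: `w_1 ↦ n`, other `w_i ↦ i - 1`; `v_n ↦ n + 1`, other `v_j ↦ j`. -/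
def fstar (n : ℕ) : Fin n ⊕ Fin n → ℕ :=
  Sum.elim (fun i => if i.val = 0 then n else i.val)
    (fun j => if j.val = n - 1 then n + 1 else j.val + 1)

lemma fstar_ranking (hn : 2 ≤ n) {H : SimpleGraph (Fin n ⊕ Fin n)}
    (hcr : ∀ i j : Fin n, H.Adj (inl i) (inr j) → i.val = 0 ∨ j.val = n - 1) :
    IsRanking H (n + 1) (fstar n) := by
  have h0 : 0 < n := by omega
  have h1 : n - 1 < n := by omega
  have hbound : ∀ v, 1 ≤ fstar n v ∧ fstar n v ≤ n + 1 := by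
    rintro (i | j) <;> simp only [fstar, Sum.elim_inl, Sum.elim_inr] <;> split <;>
      first
      | omega
      | (constructor; · omega; · have := i.isLt; omega)
      | (constructor; · omega; · have := j.isLt; omega)
  refine ⟨hbound, ?_⟩
  have hinjl : ∀ i j : Fin n, fstar n (inl i) = fstar n (inl j) → i = j := by
    intro i j h
    simp only [fstar, Sum.elim_inl] at h
    have := i.isLt; have := j.isLt
    split at h <;> split at h <;> (try omega) <;> exact Fin.ext (by omega)
  have hinjr : ∀ i j : Fin n, fstar n (inr i) = fstar n (inr j) → i = j := by
    intro i j h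
    simp only [fstar, Sum.elim_inr] at h
    have := i.isLt; have := j.isLt
    split at h <;> split at h <;> (try omega) <;> exact Fin.ext (by omega)
  have hcross : ∀ i j : Fin n, fstar n (inl i) = fstar n (inr j) →
      fstar n (inl i) ≤ n - 1 := by
    intro i j h
    simp only [fstar, Sum.elim_inl, Sum.elim_inr] at h ⊢
    have := i.isLt; have := j.isLt
    split at h <;> split at h <;> split <;> omega
  have hbig0 : fstar n (inl ⟨0, h0⟩) = n := by simp [fstar]
  have hbig1 : fstar n (inr ⟨n - 1, h1⟩) = n + 1 := by simp [fstar]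
  intro u v hne he p hp
  rcases u with i | i <;> rcases v with j | j
  · exact absurd (by rw [hinjl i j he]) hne
  · rcases crossing h0 h1 hcr p ⟨i, rfl⟩ ⟨j, rfl⟩ with hc | hc
    · exact ⟨_, hc, by rw [hbig0]; have := hcross i j he; omega⟩
    · exact ⟨_, hc, by rw [hbig1]; have := hcross i j he; omega⟩
  · rcases crossing h0 h1 hcr p.reverse ⟨j, rfl⟩ ⟨i, rfl⟩ with hc | hc <;>
      rw [Walk.support_reverse, List.mem_reverse] at hc
    · exact ⟨_, hc, by rw [hbig0]; have := hcross j i he.symm; omega⟩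
    · exact ⟨_, hc, by rw [hbig1]; have := hcross j i he.symm; omega⟩
  · exact absurd (by rw [hinjr i j he]) hne

/-- The rank number of any graph between `G_n` and `G_n` plus cross edges touching the
endpoints of the bridge is `n + 1`. -/
lemma rank_eq (hn : 2 ≤ n) {H : SimpleGraph (Fin n ⊕ Fin n)} (hG : twoCliques n ≤ H)
    (hcr : ∀ i j : Fin n, H.Adj (inl i) (inr j) → i.val = 0 ∨ j.val = n - 1) :
    rankNumber H = n + 1 := by
  refine le_antisymm (rankNumber_le (fstar_ranking hn hcr)) ?_
  obtain ⟨g, hg⟩ := rankNumber_spec H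
  exact rank_lb hn hG hg

lemma sym2_cross_eq {i j a b : Fin n} :
    s((inl i : Fin n ⊕ Fin n), inr j) = s((inl a : Fin n ⊕ Fin n), inr b) ↔
      i = a ∧ j = b := by
  rw [Sym2.eq_iff]; simp

/-- The added edge set: all cross edges incident to `w_1` or `v_n`, except the bridge. -/
def S0 (n : ℕ) (h0 : 0 < n) (h1 : n - 1 < n) : Finset (Sym2 (Fin n ⊕ Fin n)) :=
  ((Finset.univ.image fun j : Fin n => s((inl ⟨0, h0⟩ : Fin n ⊕ Fin n), inr j)).erase
      s((inl ⟨0, h0⟩ : Fin n ⊕ Fin n), inr ⟨n - 1, h1⟩)) ∪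
  ((Finset.univ.image fun i : Fin n => s((inl i : Fin n ⊕ Fin n), inr ⟨n - 1, h1⟩)).erase
      s((inl ⟨0, h0⟩ : Fin n ⊕ Fin n), inr ⟨n - 1, h1⟩))

lemma S0_mem {h0 : 0 < n} {h1 : n - 1 < n} {e : Sym2 (Fin n ⊕ Fin n)} :
    e ∈ S0 n h0 h1 ↔
      (∃ j : Fin n, j ≠ ⟨n - 1, h1⟩ ∧ e = s((inl ⟨0, h0⟩ : Fin n ⊕ Fin n), inr j)) ∨
      (∃ i : Fin n, i ≠ ⟨0, h0⟩ ∧ e = s((inl i : Fin n ⊕ Fin n), inr ⟨n - 1, h1⟩)) := by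
  simp only [S0, Finset.mem_union, Finset.mem_erase, Finset.mem_image, Finset.mem_univ,
    true_and]
  constructor
  · rintro (⟨hne, j, rfl⟩ | ⟨hne, i, rfl⟩)
    · exact Or.inl ⟨j, fun h => hne (by rw [h]), rfl⟩
    · exact Or.inr ⟨i, fun h => hne (by rw [h]), rfl⟩
  · rintro (⟨j, hj, rfl⟩ | ⟨i, hi, rfl⟩)
    · exact Or.inl ⟨by rw [Ne, sym2_cross_eq]; tauto, j, rfl⟩
    · exact Or.inr ⟨by rw [Ne, sym2_cross_eq]; tauto, i, rfl⟩

lemma S0_card (h0 : 0 < n) (h1 : n - 1 < n) :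
    (S0 n h0 h1).card = 2 * (n - 1) := by
  have hinj1 : Function.Injective
      fun j : Fin n => s((inl ⟨0, h0⟩ : Fin n ⊕ Fin n), inr j) := by
    intro a b h; exact ((sym2_cross_eq).1 h).2
  have hinj2 : Function.Injective
      fun i : Fin n => s((inl i : Fin n ⊕ Fin n), inr ⟨n - 1, h1⟩) := by
    intro a b h; exact ((sym2_cross_eq).1 h).1
  rw [S0, Finset.card_union_of_disjoint, Finset.card_erase_of_mem, Finset.card_erase_of_mem,
    Finset.card_image_of_injective _ hinj1, Finset.card_image_of_injective _ hinj2]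
  · simp; omega
  · exact Finset.mem_image_of_mem _ (Finset.mem_univ _)
  · exact Finset.mem_image_of_mem _ (Finset.mem_univ _)
  · rw [Finset.disjoint_left]
    intro e he1 he2
    simp only [Finset.mem_erase, Finset.mem_image, Finset.mem_univ, true_and] at he1 he2
    obtain ⟨hne, j, rfl⟩ := he1
    obtain ⟨hne', i, hi⟩ := he2
    rw [sym2_cross_eq] at hi
    exact hne' (by rw [← hi.1, ← hi.2])

lemma S0_not_edge {h0 : 0 < n} {h1 : n - 1 < n} {e : Sym2 (Fin n ⊕ Fin n)}
    (he : e ∈ S0 n h0 h1) : ¬e.IsDiag ∧ e ∉ (twoCliques n).edgeSet := by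
  rcases S0_mem.1 he with ⟨j, hj, rfl⟩ | ⟨i, hi, rfl⟩
  · refine ⟨by simp, ?_⟩
    rw [mem_edgeSet, tc_cross_adj]
    rintro ⟨-, h2⟩
    exact hj (Fin.ext h2)
  · refine ⟨by simp, ?_⟩
    rw [mem_edgeSet, tc_cross_adj]
    rintro ⟨h2, -⟩
    exact hi (Fin.ext h2)

lemma H0_cross {h0 : 0 < n} {h1 : n - 1 < n} {i j : Fin n}
    (h : (twoCliques n ⊔ fromEdgeSet (S0 n h0 h1 : Set (Sym2 (Fin n ⊕ Fin n)))).Adj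
      (inl i) (inr j)) : i.val = 0 ∨ j.val = n - 1 := by
  rcases h with h | h
  · exact Or.inl (tc_cross_adj.1 h).1
  · rw [fromEdgeSet_adj] at h
    have := h.1
    rw [Finset.mem_coe, S0_mem] at this
    rcases this with ⟨j', -, hj⟩ | ⟨i', -, hi⟩
    · rw [sym2_cross_eq] at hj
      exact Or.inl (by rw [hj.1])
    · rw [sym2_cross_eq] at hi
      exact Or.inr (by rw [hi.2])

lemma cross_of_notdiag_notedge {e : Sym2 (Fin n ⊕ Fin n)} (hd : ¬e.IsDiag)
    (hne : e ∉ (twoCliques n).edgeSet) :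
    ∃ a b : Fin n, e = s((inl a : Fin n ⊕ Fin n), inr b) := by
  induction e with
  | _ u v =>
    rcases u with a | a <;> rcases v with b | b
    · exact absurd ((mem_edgeSet _).2 (tc_adj_inl (by rintro rfl; exact hd (by simp)))) hne
    · exact ⟨a, b, rfl⟩
    · exact ⟨b, a, Sym2.eq_swap⟩
    · exact absurd ((mem_edgeSet _).2 (tc_adj_inr (by rintro rfl; exact hd (by simp)))) hne

/-- Counting: if every edge of `S` touches `inl w` or `inr x`, and the bridge also does
but is not in `S`, then `S` has at most `2(n-1)` edges. -/
lemma count_pair (hn : 2 ≤ n) (h0 : 0 < n) (h1 : n - 1 < n)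
    {S : Finset (Sym2 (Fin n ⊕ Fin n))} {w x : Fin n}
    (hS : ∀ e ∈ S, ∃ a b : Fin n, e = s((inl a : Fin n ⊕ Fin n), inr b) ∧ (a = w ∨ b = x))
    (hbr : (⟨0, h0⟩ : Fin n) = w ∨ (⟨n - 1, h1⟩ : Fin n) = x)
    (hbrS : s((inl ⟨0, h0⟩ : Fin n ⊕ Fin n), inr ⟨n - 1, h1⟩) ∉ S) :
    S.card ≤ 2 * (n - 1) := by
  set Ew : Finset (Sym2 (Fin n ⊕ Fin n)) :=
    Finset.univ.image fun b : Fin n => s((inl w : Fin n ⊕ Fin n), inr b) with hEw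
  set Ex : Finset (Sym2 (Fin n ⊕ Fin n)) :=
    Finset.univ.image fun a : Fin n => s((inl a : Fin n ⊕ Fin n), inr x) with hEx
  have hinj1 : Function.Injective fun b : Fin n => s((inl w : Fin n ⊕ Fin n), inr b) := by
    intro a b h; exact ((sym2_cross_eq).1 h).2
  have hinj2 : Function.Injective fun a : Fin n => s((inl a : Fin n ⊕ Fin n), inr x) := by
    intro a b h; exact ((sym2_cross_eq).1 h).1
  have hEwcard : Ew.card = n := by
    rw [hEw, Finset.card_image_of_injective _ hinj1]; simp
  have hExcard : Ex.card = n := by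
    rw [hEx, Finset.card_image_of_injective _ hinj2]; simp
  have hinter : Ew ∩ Ex = {s((inl w : Fin n ⊕ Fin n), inr x)} := by
    ext e
    simp only [Finset.mem_inter, hEw, hEx, Finset.mem_image, Finset.mem_univ, true_and,
      Finset.mem_singleton]
    constructor
    · rintro ⟨⟨b, rfl⟩, a, ha⟩
      rw [sym2_cross_eq] at ha
      rw [ha.2]
    · rintro rfl
      exact ⟨⟨x, rfl⟩, w, rfl⟩
  have huni : (Ew ∪ Ex).card = 2 * n - 1 := by
    have := Finset.card_union_add_card_inter Ew Ex
    rw [hinter, hEwcard, hExcard, Finset.card_singleton] at this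
    omega
  have hbr_mem : s((inl ⟨0, h0⟩ : Fin n ⊕ Fin n), inr ⟨n - 1, h1⟩) ∈ Ew ∪ Ex := by
    rcases hbr with rfl | rfl
    · exact Finset.mem_union_left _ (Finset.mem_image_of_mem _ (Finset.mem_univ _))
    · exact Finset.mem_union_right _ (Finset.mem_image_of_mem _ (Finset.mem_univ _))
  have hsub : S ⊆ (Ew ∪ Ex).erase s((inl ⟨0, h0⟩ : Fin n ⊕ Fin n), inr ⟨n - 1, h1⟩) := by
    intro e he
    obtain ⟨a, b, rfl, hab⟩ := hS e he
    rw [Finset.mem_erase]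
    refine ⟨fun hEq => hbrS (hEq ▸ he), ?_⟩
    rcases hab with rfl | rfl
    · exact Finset.mem_union_left _ (Finset.mem_image_of_mem _ (Finset.mem_univ _))
    · exact Finset.mem_union_right _ (Finset.mem_image_of_mem _ (Finset.mem_univ _))
  have := Finset.card_le_card hsub
  rw [Finset.card_erase_of_mem hbr_mem, huni] at this
  omega

lemma count_single_r {S : Finset (Sym2 (Fin n ⊕ Fin n))} {x : Fin n}
    (hS : ∀ e ∈ S, ∃ a : Fin n, e = s((inl a : Fin n ⊕ Fin n), inr x)) :
    S.card ≤ n := by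
  have hsub : S ⊆ Finset.univ.image fun a : Fin n => s((inl a : Fin n ⊕ Fin n), inr x) := by
    intro e he
    obtain ⟨a, rfl⟩ := hS e he
    exact Finset.mem_image_of_mem _ (Finset.mem_univ _)
  calc S.card ≤ _ := Finset.card_le_card hsub
    _ ≤ Finset.univ.card := Finset.card_image_le
    _ = n := by simp

lemma count_single_l {S : Finset (Sym2 (Fin n ⊕ Fin n))} {w : Fin n}
    (hS : ∀ e ∈ S, ∃ b : Fin n, e = s((inl w : Fin n ⊕ Fin n), inr b)) :
    S.card ≤ n := by
  have hsub : S ⊆ Finset.univ.image fun b : Fin n => s((inl w : Fin n ⊕ Fin n), inr b) := by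
    intro e he
    obtain ⟨b, rfl⟩ := hS e he
    exact Finset.mem_image_of_mem _ (Finset.mem_univ _)
  calc S.card ≤ _ := Finset.card_le_card hsub
    _ ≤ Finset.univ.card := Finset.card_image_le
    _ = n := by simp

end MuTwoCliquesAux

open MuTwoCliquesAux Sum in
/-- for every integer `n ≥ 2`, `μ(G_n) = 2(n - 1)`: the maximum number of
edges that can be added to `G_n` without changing its rank number. -/
theorem mu_twoCliques (n : ℕ) (hn : 2 ≤ n) :
    mu (twoCliques n) = 2 * (n - 1) := by
  have h0 : 0 < n := by omega
  have h1 : n - 1 < n := by omega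
  have hrG : rankNumber (twoCliques n) = n + 1 :=
    rank_eq hn le_rfl (fun i j h => Or.inl (tc_cross_adj.1 h).1)
  have hmem : 2 * (n - 1) ∈ {N | ∃ S : Finset (Sym2 (Fin n ⊕ Fin n)), S.card = N ∧
      (∀ e ∈ S, ¬e.IsDiag ∧ e ∉ (twoCliques n).edgeSet) ∧
      rankNumber (twoCliques n ⊔ SimpleGraph.fromEdgeSet (S : Set (Sym2 (Fin n ⊕ Fin n)))) =
        rankNumber (twoCliques n)} := by
    refine ⟨S0 n h0 h1, S0_card h0 h1, fun e he => S0_not_edge he, ?_⟩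
    rw [hrG]
    exact rank_eq hn le_sup_left (fun i j h => H0_cross h)
  have hub : ∀ N ∈ {N | ∃ S : Finset (Sym2 (Fin n ⊕ Fin n)), S.card = N ∧
      (∀ e ∈ S, ¬e.IsDiag ∧ e ∉ (twoCliques n).edgeSet) ∧
      rankNumber (twoCliques n ⊔ SimpleGraph.fromEdgeSet (S : Set (Sym2 (Fin n ⊕ Fin n)))) =
        rankNumber (twoCliques n)}, N ≤ 2 * (n - 1) := by
    rintro N ⟨S, rfl, hprop, hrank⟩
    rw [hrG] at hrank
    set H : SimpleGraph (Fin n ⊕ Fin n) :=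
      twoCliques n ⊔ SimpleGraph.fromEdgeSet (S : Set (Sym2 (Fin n ⊕ Fin n))) with hH
    have hGH : twoCliques n ≤ H := le_sup_left
    obtain ⟨g, hg⟩ := rankNumber_spec H
    rw [hrank] at hg
    have hSH : ∀ e ∈ S, e ∈ H.edgeSet := by
      intro e he
      rw [hH, edgeSet_sup]
      right
      rw [edgeSet_fromEdgeSet]
      exact ⟨he, (hprop e he).1⟩
    have hScross : ∀ e ∈ S, ∃ a b : Fin n, e = s((inl a : Fin n ⊕ Fin n), inr b) :=
      fun e he => cross_of_notdiag_notedge (hprop e he).1 (hprop e he).2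
    have hbradj : H.Adj (inl ⟨0, h0⟩) (inr ⟨n - 1, h1⟩) := hGH (tc_adj_bridge rfl rfl)
    have hbrS : s((inl ⟨0, h0⟩ : Fin n ⊕ Fin n), inr ⟨n - 1, h1⟩) ∉ S :=
      fun h => (hprop _ h).2 ((mem_edgeSet _).2 (tc_adj_bridge rfl rfl))
    have hubv : ∀ v, g v ≤ n + 1 := fun v => (hg.1 v).2
    have hlbv : ∀ v, 1 ≤ g v := fun v => (hg.1 v).1
    have injL := label_inj_inl hGH hg
    have injR := label_inj_inr hGH hg
    set A : Finset ℕ := Finset.univ.image (fun i : Fin n => g (inl i)) with hA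
    set B : Finset ℕ := Finset.univ.image (fun j : Fin n => g (inr j)) with hB
    have hAcard : A.card = n := by
      rw [hA, Finset.card_image_of_injective _ injL]; simp
    have hBcard : B.card = n := by
      rw [hB, Finset.card_image_of_injective _ injR]; simp
    have hAmem : ∀ ℓ, ℓ ∈ A ↔ ∃ i, g (inl i) = ℓ := by
      intro ℓ; simp [hA]
    have hBmem : ∀ ℓ, ℓ ∈ B ↔ ∃ j, g (inr j) = ℓ := by
      intro ℓ; simp [hB]
    by_cases hBtop : n + 1 ∈ B
    · -- the label n+1 appears on the right side
      have hAtop : n + 1 ∉ A := by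
        intro hAtop
        obtain ⟨i, hi⟩ := (hAmem _).1 hAtop
        obtain ⟨j, hj⟩ := (hBmem _).1 hBtop
        have := ranking_cross hGH hg hbradj (hi.trans hj.symm)
        have := hubv (inl ⟨0, h0⟩); have := hubv (inr ⟨n - 1, h1⟩)
        omega
      have hAsub : A ⊆ Finset.Icc 1 n := by
        intro ℓ hℓ
        obtain ⟨i, hi⟩ := (hAmem _).1 hℓ
        have hne : ℓ ≠ n + 1 := fun h => hAtop (h ▸ hℓ)
        have := hubv (inl i); have := hlbv (inl i)
        rw [Finset.mem_Icc]; omega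
      have hAeq : A = Finset.Icc 1 n := Finset.eq_of_subset_of_card_le hAsub
        (by rw [hAcard, Nat.card_Icc]; omega)
      obtain ⟨x, hx⟩ := (hBmem _).1 hBtop
      by_cases hnB : n ∈ B
      · obtain ⟨j, hj⟩ := (hBmem _).1 hnB
        have hnA : n ∈ A := by rw [hAeq, Finset.mem_Icc]; omega
        obtain ⟨i, hi⟩ := (hAmem _).1 hnA
        have hS' : ∀ e ∈ S, ∃ a : Fin n, e = s((inl a : Fin n ⊕ Fin n), inr x) := by
          intro e he
          obtain ⟨a, b, rfl⟩ := hScross e he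
          have hadj : H.Adj (inl a) (inr b) := (mem_edgeSet _).1 (hSH _ he)
          rcases ranking_cross hGH hg hadj (hi.trans hj.symm) with hlt | hlt
          · exfalso
            have hmA : g (inl a) ∈ A := (hAmem _).2 ⟨a, rfl⟩
            rw [hAeq, Finset.mem_Icc] at hmA
            omega
          · have hgb : g (inr b) = n + 1 := by have := hubv (inr b); omega
            exact ⟨a, by rw [injR (hgb.trans hx.symm)]⟩
        have := count_single_r hS'
        omega
      · have hBsub : B ⊆ (Finset.Icc 1 (n + 1)).erase n := by
          intro ℓ hℓ
          obtain ⟨j, hj⟩ := (hBmem _).1 hℓ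
          have hne : ℓ ≠ n := fun h => hnB (h ▸ hℓ)
          have := hubv (inr j); have := hlbv (inr j)
          rw [Finset.mem_erase, Finset.mem_Icc]; omega
        have hBeq : B = (Finset.Icc 1 (n + 1)).erase n :=
          Finset.eq_of_subset_of_card_le hBsub (by
            rw [hBcard, Finset.card_erase_of_mem (by rw [Finset.mem_Icc]; omega),
              Nat.card_Icc]
            omega)
        have hn1B : (n - 1 : ℕ) ∈ B := by
          rw [hBeq, Finset.mem_erase, Finset.mem_Icc]; omega
        have hn1A : (n - 1 : ℕ) ∈ A := by rw [hAeq, Finset.mem_Icc]; omega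
        obtain ⟨i, hi⟩ := (hAmem _).1 hn1A
        obtain ⟨j, hj⟩ := (hBmem _).1 hn1B
        have hnA : n ∈ A := by rw [hAeq, Finset.mem_Icc]; omega
        obtain ⟨w, hw⟩ := (hAmem _).1 hnA
        have hkey : ∀ a b : Fin n, H.Adj (inl a) (inr b) → a = w ∨ b = x := by
          intro a b hadj
          rcases ranking_cross hGH hg hadj (hi.trans hj.symm) with hlt | hlt
          · left
            have hmA : g (inl a) ∈ A := (hAmem _).2 ⟨a, rfl⟩
            rw [hAeq, Finset.mem_Icc] at hmA
            have hga : g (inl a) = n := by omega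
            exact injL (hga.trans hw.symm)
          · right
            have hmB : g (inr b) ∈ B := (hBmem _).2 ⟨b, rfl⟩
            rw [hBeq, Finset.mem_erase, Finset.mem_Icc] at hmB
            have hgb : g (inr b) = n + 1 := by omega
            exact injR (hgb.trans hx.symm)
        have hS' : ∀ e ∈ S, ∃ a b : Fin n,
            e = s((inl a : Fin n ⊕ Fin n), inr b) ∧ (a = w ∨ b = x) := by
          intro e he
          obtain ⟨a, b, rfl⟩ := hScross e he
          exact ⟨a, b, rfl, hkey a b ((mem_edgeSet _).1 (hSH _ he))⟩
        exact count_pair hn h0 h1 hS' (hkey _ _ hbradj) hbrS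
    · -- the label n+1 does not appear on the right side
      have hBsub : B ⊆ Finset.Icc 1 n := by
        intro ℓ hℓ
        obtain ⟨j, hj⟩ := (hBmem _).1 hℓ
        have hne : ℓ ≠ n + 1 := fun h => hBtop (h ▸ hℓ)
        have := hubv (inr j); have := hlbv (inr j)
        rw [Finset.mem_Icc]; omega
      have hBeq : B = Finset.Icc 1 n := Finset.eq_of_subset_of_card_le hBsub
        (by rw [hBcard, Nat.card_Icc]; omega)
      have hAtop : n + 1 ∈ A := by
        by_contra hAtop
        have hAsub : A ⊆ Finset.Icc 1 n := by
          intro ℓ hℓ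
          obtain ⟨i, hi⟩ := (hAmem _).1 hℓ
          have hne : ℓ ≠ n + 1 := fun h => hAtop (h ▸ hℓ)
          have := hubv (inl i); have := hlbv (inl i)
          rw [Finset.mem_Icc]; omega
        have hAeq : A = Finset.Icc 1 n := Finset.eq_of_subset_of_card_le hAsub
          (by rw [hAcard, Nat.card_Icc]; omega)
        have hnA : n ∈ A := by rw [hAeq, Finset.mem_Icc]; omega
        have hnB : n ∈ B := by rw [hBeq, Finset.mem_Icc]; omega
        obtain ⟨i, hi⟩ := (hAmem _).1 hnA
        obtain ⟨j, hj⟩ := (hBmem _).1 hnB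
        rcases ranking_cross hGH hg hbradj (hi.trans hj.symm) with hlt | hlt
        · have hmA : g (inl ⟨0, h0⟩) ∈ A := (hAmem _).2 ⟨_, rfl⟩
          rw [hAeq, Finset.mem_Icc] at hmA
          omega
        · have hmB : g (inr ⟨n - 1, h1⟩) ∈ B := (hBmem _).2 ⟨_, rfl⟩
          rw [hBeq, Finset.mem_Icc] at hmB
          omega
      obtain ⟨w, hw⟩ := (hAmem _).1 hAtop
      have hnB : n ∈ B := by rw [hBeq, Finset.mem_Icc]; omega
      obtain ⟨x, hx⟩ := (hBmem _).1 hnB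
      by_cases hnA : n ∈ A
      · obtain ⟨i, hi⟩ := (hAmem _).1 hnA
        have hS' : ∀ e ∈ S, ∃ b : Fin n, e = s((inl w : Fin n ⊕ Fin n), inr b) := by
          intro e he
          obtain ⟨a, b, rfl⟩ := hScross e he
          have hadj : H.Adj (inl a) (inr b) := (mem_edgeSet _).1 (hSH _ he)
          rcases ranking_cross hGH hg hadj (hi.trans hx.symm) with hlt | hlt
          · have hga : g (inl a) = n + 1 := by have := hubv (inl a); omega
            exact ⟨b, by rw [injL (hga.trans hw.symm)]⟩
          · exfalso
            have hmB : g (inr b) ∈ B := (hBmem _).2 ⟨b, rfl⟩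
            rw [hBeq, Finset.mem_Icc] at hmB
            omega
        have := count_single_l hS'
        omega
      · have hAsub' : A ⊆ (Finset.Icc 1 (n + 1)).erase n := by
          intro ℓ hℓ
          obtain ⟨i, hi⟩ := (hAmem _).1 hℓ
          have hne : ℓ ≠ n := fun h => hnA (h ▸ hℓ)
          have := hubv (inl i); have := hlbv (inl i)
          rw [Finset.mem_erase, Finset.mem_Icc]; omega
        have hAeq' : A = (Finset.Icc 1 (n + 1)).erase n :=
          Finset.eq_of_subset_of_card_le hAsub' (by
            rw [hAcard, Finset.card_erase_of_mem (by rw [Finset.mem_Icc]; omega),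
              Nat.card_Icc]
            omega)
        have hn1A : (n - 1 : ℕ) ∈ A := by
          rw [hAeq', Finset.mem_erase, Finset.mem_Icc]; omega
        have hn1B : (n - 1 : ℕ) ∈ B := by rw [hBeq, Finset.mem_Icc]; omega
        obtain ⟨i, hi⟩ := (hAmem _).1 hn1A
        obtain ⟨j, hj⟩ := (hBmem _).1 hn1B
        have hkey : ∀ a b : Fin n, H.Adj (inl a) (inr b) → a = w ∨ b = x := by
          intro a b hadj
          rcases ranking_cross hGH hg hadj (hi.trans hj.symm) with hlt | hlt
          · left
            have hmA : g (inl a) ∈ A := (hAmem _).2 ⟨a, rfl⟩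
            rw [hAeq', Finset.mem_erase, Finset.mem_Icc] at hmA
            have hga : g (inl a) = n + 1 := by omega
            exact injL (hga.trans hw.symm)
          · right
            have hmB : g (inr b) ∈ B := (hBmem _).2 ⟨b, rfl⟩
            rw [hBeq, Finset.mem_Icc] at hmB
            have hgb : g (inr b) = n := by omega
            exact injR (hgb.trans hx.symm)
        have hS' : ∀ e ∈ S, ∃ a b : Fin n,
            e = s((inl a : Fin n ⊕ Fin n), inr b) ∧ (a = w ∨ b = x) := by
          intro e he
          obtain ⟨a, b, rfl⟩ := hScross e he
          exact ⟨a, b, rfl, hkey a b ((mem_edgeSet _).1 (hSH _ he))⟩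
        exact count_pair hn h0 h1 hS' (hkey _ _ hbradj) hbrS
  exact le_antisymm (csSup_le ⟨_, hmem⟩ hub) (le_csSup ⟨2 * (n - 1), hub⟩ hmem)
end
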